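/- Let n ≥ 2 be an integer, b > 0, and C ∈ ℝ. Suppose v : ℝ → ℝ is twice continuously differentiable on (0,b) and satisfies the radial Hamiltonian stationary ODE v''(r)/(1+v'(r)^2) + (n−1)(r·v'(r) − v(r))/(r^2+v(r)^2) = C·(1+v'(r)^2)^{1/2}/(r^2+v(r)^2)^{(n−1)/2} for all r ∈ (0,b), and that v(r) → 0 as r → 0⁺. Then C = 0 and there is a constant k ∈ ℝ such that v(r) = k·r for all r ∈ (0,b); that is, the radial potential u (with u' = v) is a quadratic polynomial and its gradient graph is a flat disk. -/

import Mathlib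

open Set Filter Real

set_option maxHeartbeats 1000000 in
/-- (First half of Theorem `two` of Chen–Warren.)
If `v` is twice continuously differentiable on `(0,b)`, solves the radial Hamiltonian
stationary ODE, and `v(r) → 0` as `r → 0⁺`, then `C = 0` and `v(r) = k r` for some
constant `k`; i.e. the radial potential `u` (with `u' = v`) is a quadratic polynomial
and its gradient graph is a flat disk. -/
theorem radial_solution_zero_limit_is_linear
    (n : ℕ) (hn : 2 ≤ n) (b C : ℝ) (hb : 0 < b)
    (v : ℝ → ℝ) (hv : ContDiffOn ℝ 2 v (Set.Ioo 0 b))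
    (hode : ∀ r ∈ Set.Ioo (0 : ℝ) b,
      deriv (deriv v) r / (1 + (deriv v r) ^ 2)
        + ((n : ℝ) - 1) * (r * deriv v r - v r) / (r ^ 2 + (v r) ^ 2)
        = C * Real.sqrt (1 + (deriv v r) ^ 2)
            / Real.sqrt ((r ^ 2 + (v r) ^ 2) ^ (n - 1)))
    (hlim : Filter.Tendsto v (nhdsWithin 0 (Set.Ioi 0)) (nhds 0)) :
    C = 0 ∧ ∃ k : ℝ, ∀ r ∈ Set.Ioo (0 : ℝ) b, v r = k * r := by
  have hS : IsOpen (Set.Ioo (0:ℝ) b) := isOpen_Ioo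
  have hdvS : ContDiffOn ℝ 1 (deriv v) (Set.Ioo 0 b) := by
    have := hv.deriv_of_isOpen hS (m := 1) (by norm_num)
    exact this
  have hd1 : ∀ r ∈ Set.Ioo (0:ℝ) b, HasDerivAt v (deriv v r) r := fun r hr =>
    ((hv.differentiableOn (by norm_num)).differentiableAt (hS.mem_nhds hr)).hasDerivAt
  have hd2 : ∀ r ∈ Set.Ioo (0:ℝ) b, HasDerivAt (deriv v) (deriv (deriv v) r) r := fun r hr =>
    ((hdvS.differentiableOn one_ne_zero).differentiableAt (hS.mem_nhds hr)).hasDerivAt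
  set q : ℝ → ℝ := fun r => r ^ 2 + (v r) ^ 2 with hq_def
  have hqpos : ∀ r ∈ Set.Ioo (0:ℝ) b, 0 < q r := fun r hr => by
    have h1 : 0 < r ^ 2 := by nlinarith [hr.1]
    have h2 : 0 ≤ (v r)^2 := sq_nonneg _
    simp only [hq_def]; nlinarith
  have hdpos : ∀ r : ℝ, (0:ℝ) < 1 + (deriv v r) ^ 2 := fun r => by positivity
  -- derivative of θ
  set θ : ℝ → ℝ := fun r => Real.arctan (deriv v r) + ((n:ℝ) - 1) * Real.arctan (v r / r)
    with hθ_def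
  have hθd : ∀ r ∈ Set.Ioo (0:ℝ) b, HasDerivAt θ
      (C * Real.sqrt (1 + (deriv v r) ^ 2) / Real.sqrt ((q r) ^ (n - 1))) r := by
    intro r hr
    have hr0 : 0 < r := hr.1
    have h1 : HasDerivAt (fun r => Real.arctan (deriv v r))
        (deriv (deriv v) r / (1 + (deriv v r) ^ 2)) r := by
      have := (hd2 r hr).arctan
      rwa [one_div, inv_mul_eq_div] at this
    have h2 : HasDerivAt (fun r => v r / r)
        ((deriv v r * r - v r * 1) / r ^ 2) r := (hd1 r hr).div (hasDerivAt_id r) hr0.ne'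
    have h3 : HasDerivAt (fun r => Real.arctan (v r / r))
        (((deriv v r * r - v r * 1) / r ^ 2) / (1 + (v r / r) ^ 2)) r := by
      have := h2.arctan
      rwa [one_div, inv_mul_eq_div] at this
    have heq : ((deriv v r * r - v r * 1) / r ^ 2) / (1 + (v r / r) ^ 2)
        = (r * deriv v r - v r) / (r ^ 2 + (v r) ^ 2) := by
      have hq : r ^ 2 + (v r) ^ 2 ≠ 0 := (hqpos r hr).ne'
      field_simp
    rw [heq] at h3
    have := h1.add (h3.const_mul ((n:ℝ) - 1))
    have hsum : deriv (deriv v) r / (1 + (deriv v r) ^ 2)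
        + ((n:ℝ) - 1) * ((r * deriv v r - v r) / (r ^ 2 + (v r) ^ 2))
        = C * Real.sqrt (1 + (deriv v r) ^ 2) / Real.sqrt ((q r) ^ (n - 1)) := by
      rw [← hode r hr]; ring
    rw [hsum] at this
    exact this
  -- Part A : C = 0
  have hC0 : C = 0 := by
    by_contra hC
    -- find δ with |v| < 1/2 on Ioo 0 δ
    have hball : {r : ℝ | |v r| < 1/2} ∈ nhdsWithin 0 (Set.Ioi 0) := by
      have := hlim (Metric.ball_mem_nhds (0:ℝ) (by norm_num : (0:ℝ) < 1/2))
      refine Filter.mem_of_superset this fun r hr => ?_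
      simp only [Set.mem_preimage, Metric.mem_ball, Real.dist_eq, sub_zero] at hr
      simpa using hr
    rw [Metric.mem_nhdsWithin_iff] at hball
    obtain ⟨δ, hδpos, hδsub⟩ := hball
    set r₁ : ℝ := min δ (min b 1) / 2 with hr₁_def
    have hr₁pos : 0 < r₁ := by
      have := lt_min hb (by norm_num : (0:ℝ) < 1)
      simp only [hr₁_def]
      have := lt_min hδpos this
      linarith
    have hr₁δ : r₁ < δ := by
      simp only [hr₁_def]
      have h1 : min δ (min b 1) ≤ δ := min_le_left _ _
      linarith
    have hr₁b : r₁ < b := by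
      simp only [hr₁_def]
      have h1 : min δ (min b 1) ≤ b := le_trans (min_le_right _ _) (min_le_left _ _)
      linarith
    have hr₁half : r₁ ≤ 1/2 := by
      simp only [hr₁_def]
      have h1 : min δ (min b 1) ≤ 1 := le_trans (min_le_right _ _) (min_le_right _ _)
      linarith
    have hvsmall : ∀ r ∈ Set.Ioo (0:ℝ) r₁, |v r| < 1/2 := by
      intro r hr
      apply hδsub
      constructor
      · simp only [Metric.mem_ball, Real.dist_eq, sub_zero]
        rw [abs_of_pos hr.1]; exact lt_trans hr.2 hr₁δ
      · exact hr.1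
    -- the comparison function
    set h : ℝ → ℝ := fun r => θ r / C - Real.log (q r) / 2 with hh_def
    set h' : ℝ → ℝ := fun r =>
      C * Real.sqrt (1 + (deriv v r) ^ 2) / Real.sqrt ((q r) ^ (n - 1)) / C
        - (2 * r + 2 * v r * deriv v r) / (q r) / 2 with hh'_def
    have hqd : ∀ r ∈ Set.Ioo (0:ℝ) b,
        HasDerivAt q (2 * r + 2 * v r * deriv v r) r := by
      intro r hr
      have h1 : HasDerivAt (fun r : ℝ => r ^ 2) (2 * r) r := by
        simpa using hasDerivAt_pow 2 r
      have h2 : HasDerivAt (fun r => (v r) ^ 2) (2 * v r * deriv v r) r := by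
        simpa using (hd1 r hr).fun_pow 2
      exact h1.add h2
    have hhd : ∀ r ∈ Set.Ioo (0:ℝ) b, HasDerivAt h (h' r) r := by
      intro r hr
      exact ((hθd r hr).div_const C).sub
        ((((hqd r hr).log (hqpos r hr).ne')).div_const 2)
    -- h' is nonneg on Ioo 0 r₁
    have hh'nonneg : ∀ r ∈ Set.Ioo (0:ℝ) r₁, 0 ≤ h' r := by
      intro r hr
      have hrb : r ∈ Set.Ioo (0:ℝ) b := ⟨hr.1, lt_trans hr.2 hr₁b⟩
      have hQpos : 0 < q r := hqpos r hrb
      have hQ1 : q r ≤ 1 := by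
        have h1 : |v r| < 1/2 := hvsmall r hr
        have h2 : r < 1/2 := lt_of_lt_of_le hr.2 hr₁half
        have h3 : (v r)^2 ≤ (1/2)^2 := by
          rw [← sq_abs]; apply pow_le_pow_left₀ (abs_nonneg _) h1.le
        simp only [hq_def]
        nlinarith [hr.1]
      set d := deriv v r with hd_def
      have hsn : 0 < Real.sqrt ((q r) ^ (n-1)) := Real.sqrt_pos.mpr (pow_pos hQpos _)
      have hsq : 0 < Real.sqrt (q r) := Real.sqrt_pos.mpr hQpos
      have step1 : Real.sqrt ((q r)^(n-1)) ≤ Real.sqrt (q r) := by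
        apply Real.sqrt_le_sqrt
        calc (q r)^(n-1) ≤ (q r)^1 := pow_le_pow_of_le_one hQpos.le hQ1 (by omega)
        _ = q r := pow_one _
      have step2 : Real.sqrt (1 + d^2) / Real.sqrt (q r)
          ≤ Real.sqrt (1 + d^2) / Real.sqrt ((q r)^(n-1)) := by
        apply div_le_div_of_nonneg_left (Real.sqrt_nonneg _) hsn step1
      have step3 : (2*r + 2*(v r)*d) / (q r) / 2 ≤ Real.sqrt (1 + d^2) / Real.sqrt (q r) := by
        have hcs : (r + v r * d)^2 ≤ (q r) * (1 + d^2) := by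
          simp only [hq_def]; nlinarith [sq_nonneg (r * d - v r)]
        have h4 : r + v r * d ≤ Real.sqrt (q r) * Real.sqrt (1 + d^2) := by
          rw [← Real.sqrt_mul hQpos.le]
          calc r + v r * d ≤ |r + v r * d| := le_abs_self _
          _ = Real.sqrt ((r + v r * d)^2) := (Real.sqrt_sq_eq_abs _).symm
          _ ≤ Real.sqrt ((q r) * (1 + d^2)) := Real.sqrt_le_sqrt hcs
        have h5 : (2*r + 2*(v r)*d) / (q r) / 2 = (r + v r * d) / (q r) := by ring
        rw [h5, div_le_div_iff₀ hQpos hsq]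
        calc (r + v r * d) * Real.sqrt (q r)
            ≤ (Real.sqrt (q r) * Real.sqrt (1 + d^2)) * Real.sqrt (q r) := by
              apply mul_le_mul_of_nonneg_right h4 hsq.le
        _ = Real.sqrt (1 + d^2) * (Real.sqrt (q r) * Real.sqrt (q r)) := by ring
        _ = Real.sqrt (1 + d^2) * q r := by rw [Real.mul_self_sqrt hQpos.le]
      have hcancel : C * Real.sqrt (1 + d^2) / Real.sqrt ((q r)^(n-1)) / C
          = Real.sqrt (1 + d^2) / Real.sqrt ((q r)^(n-1)) := by
        field_simp
      simp only [hh'_def, ← hd_def, hcancel]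
      linarith [le_trans step3 step2]
    -- h is monotone on Ioo 0 r₁
    have hmono : MonotoneOn h (Set.Ioo 0 r₁) := by
      apply monotoneOn_of_hasDerivWithinAt_nonneg (convex_Ioo 0 r₁)
      · intro x hx
        exact (hhd x ⟨hx.1, lt_trans hx.2 hr₁b⟩).continuousAt.continuousWithinAt
      · intro x hx
        rw [interior_Ioo] at hx
        exact (hhd x ⟨hx.1, lt_trans hx.2 hr₁b⟩).hasDerivWithinAt
      · intro x hx
        rw [interior_Ioo] at hx
        exact hh'nonneg x hx
    -- θ is bounded
    set M : ℝ := Real.pi/2 + ((n:ℝ)-1) * (Real.pi/2) with hM_def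
    have hθbound : ∀ s : ℝ, -(M/|C|) ≤ θ s / C := by
      intro s
      have h1 : |Real.arctan (deriv v s)| ≤ Real.pi/2 := by
        rw [abs_le]
        exact ⟨(Real.neg_pi_div_two_lt_arctan _).le, (Real.arctan_lt_pi_div_two _).le⟩
      have h2 : |Real.arctan (v s / s)| ≤ Real.pi/2 := by
        rw [abs_le]
        exact ⟨(Real.neg_pi_div_two_lt_arctan _).le, (Real.arctan_lt_pi_div_two _).le⟩
      have hn1 : (0:ℝ) ≤ (n:ℝ) - 1 := by
        have : (2:ℝ) ≤ (n:ℝ) := by exact_mod_cast hn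
        linarith
      have hθM : |θ s| ≤ M := by
        simp only [hθ_def, hM_def]
        calc |Real.arctan (deriv v s) + ((n:ℝ)-1) * Real.arctan (v s / s)|
            ≤ |Real.arctan (deriv v s)| + |((n:ℝ)-1) * Real.arctan (v s / s)| := abs_add_le _ _
        _ = |Real.arctan (deriv v s)| + ((n:ℝ)-1) * |Real.arctan (v s / s)| := by
              rw [abs_mul, abs_of_nonneg hn1]
        _ ≤ Real.pi/2 + ((n:ℝ)-1) * (Real.pi/2) := by
              apply add_le_add h1
              apply mul_le_mul_of_nonneg_left h2 hn1
      have := neg_abs_le (θ s / C)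
      have h3 : |θ s / C| ≤ M / |C| := by
        rw [abs_div]
        gcongr
      linarith
    -- log (q s) → -∞
    have hq0 : Filter.Tendsto q (nhdsWithin 0 (Set.Ioi 0)) (nhds 0) := by
      have h1 : Filter.Tendsto (fun s : ℝ => s^2) (nhdsWithin 0 (Set.Ioi 0)) (nhds 0) := by
        have := ((continuous_pow 2).tendsto (0:ℝ)).mono_left
          (nhdsWithin_le_nhds (s := Set.Ioi (0:ℝ)))
        simpa using this
      have h2 : Filter.Tendsto (fun s => (v s)^2) (nhdsWithin 0 (Set.Ioi 0)) (nhds 0) := by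
        have := hlim.pow 2
        simpa using this
      have := h1.add h2
      simpa using this
    have hqT : Filter.Tendsto q (nhdsWithin 0 (Set.Ioi 0)) (nhdsWithin 0 (Set.Ioi 0)) := by
      rw [tendsto_nhdsWithin_iff]
      refine ⟨hq0, ?_⟩
      filter_upwards [self_mem_nhdsWithin] with s hs
      have hs0 : 0 < s := hs
      simp only [hq_def, Set.mem_Ioi]
      nlinarith [sq_nonneg (v s)]
    have hL : Filter.Tendsto (fun s => Real.log (q s)) (nhdsWithin 0 (Set.Ioi 0)) atBot :=
      Real.tendsto_log_nhdsGT_zero.comp hqT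
    have hhT : Filter.Tendsto h (nhdsWithin 0 (Set.Ioi 0)) atTop := by
      have h1 : Filter.Tendsto (fun s => Real.log (q s) / 2)
          (nhdsWithin 0 (Set.Ioi 0)) atBot := hL.atBot_div_const (by norm_num)
      have h2 : Filter.Tendsto (fun s => -(Real.log (q s) / 2))
          (nhdsWithin 0 (Set.Ioi 0)) atTop := tendsto_neg_atBot_atTop.comp h1
      have h3 : Filter.Tendsto (fun s => -(M/|C|) + -(Real.log (q s) / 2))
          (nhdsWithin 0 (Set.Ioi 0)) atTop := tendsto_atTop_add_const_left _ _ h2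
      refine Filter.tendsto_atTop_mono (fun s => ?_) h3
      have := hθbound s
      simp only [hh_def]
      linarith
    -- contradiction
    set r₂ : ℝ := r₁ / 2 with hr₂_def
    have hr₂mem : r₂ ∈ Set.Ioo (0:ℝ) r₁ := ⟨by positivity, by simp only [hr₂_def]; linarith⟩
    have hev1 : ∀ᶠ s in nhdsWithin 0 (Set.Ioi 0), h r₂ < h s := hhT.eventually_gt_atTop _
    have hev2 : ∀ᶠ s in nhdsWithin 0 (Set.Ioi 0), s ∈ Set.Ioo (0:ℝ) r₂ :=
      Filter.eventually_of_mem (Ioo_mem_nhdsGT hr₂mem.1) (fun s hs => hs)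
    obtain ⟨s, hs1, hs2⟩ := (hev1.and hev2).exists
    have hsD : s ∈ Set.Ioo (0:ℝ) r₁ := ⟨hs2.1, lt_trans hs2.2 hr₂mem.2⟩
    have := hmono hsD hr₂mem hs2.2.le
    linarith
  subst hC0
  refine ⟨rfl, ?_⟩
  -- Part B
  set g : ℝ → ℝ := fun r => r * deriv v r - v r with hg_def
  have hgcont : ∀ r ∈ Set.Ioo (0:ℝ) b, ContinuousAt g r := by
    intro r hr
    exact (continuousAt_id.mul ((hdvS.differentiableOn one_ne_zero).differentiableAt
      (hS.mem_nhds hr)).continuousAt).sub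
      ((hv.differentiableOn (by norm_num)).differentiableAt (hS.mem_nhds hr)).continuousAt
  have hgd : ∀ r ∈ Set.Ioo (0:ℝ) b, HasDerivAt g (r * deriv (deriv v) r) r := by
    intro r hr
    have h1 : HasDerivAt (fun r => r * deriv v r) (1 * deriv v r + r * deriv (deriv v) r) r :=
      (hasDerivAt_id r).mul (hd2 r hr)
    have h2 := h1.fun_sub (hd1 r hr)
    refine h2.congr_deriv ?_
    ring
  have ha : ∀ r ∈ Set.Ioo (0:ℝ) b,
      r * deriv (deriv v) r = -(((n:ℝ)-1) * (r * (1 + (deriv v r)^2)) * g r / q r) := by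
    intro r hr
    have h0 := hode r hr
    rw [zero_mul, zero_div] at h0
    have hq := (hqpos r hr).ne'
    have hd := (hdpos r).ne'
    have h1 : deriv (deriv v) r = -((1 + (deriv v r)^2) * (((n:ℝ)-1) * g r) / q r) := by
      have h2 : deriv (deriv v) r / (1 + (deriv v r)^2)
          = -(((n:ℝ)-1) * g r / q r) := by
        simp only [hg_def, hq_def] at *
        linarith
      field_simp at h2 ⊢
      linarith
    rw [h1]
    ring
  have hGd : ∀ r ∈ Set.Ioo (0:ℝ) b, HasDerivAt (fun r => (g r)^2)
      (2 * g r * (-(((n:ℝ)-1) * (r * (1 + (deriv v r)^2)) * g r / q r))) r := by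
    intro r hr
    have := (hgd r hr).fun_pow 2
    rw [ha r hr] at this
    refine this.congr_deriv ?_
    ring
  have hn1 : (0:ℝ) ≤ (n:ℝ) - 1 := by
    have : (2:ℝ) ≤ (n:ℝ) := by exact_mod_cast hn
    linarith
  have hanti : AntitoneOn (fun r => (g r)^2) (Set.Ioo 0 b) := by
    apply antitoneOn_of_hasDerivWithinAt_nonpos (convex_Ioo 0 b)
      (f' := fun r => 2 * g r * (-(((n:ℝ)-1) * (r * (1 + (deriv v r)^2)) * g r / q r)))
    · intro x hx
      exact (hGd x hx).continuousAt.continuousWithinAt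
    · intro x hx
      rw [interior_Ioo] at hx
      exact (hGd x hx).hasDerivWithinAt
    · intro x hx
      rw [interior_Ioo] at hx
      have h1 : 0 ≤ ((n:ℝ)-1) * (x * (1 + (deriv v x)^2)) * (g x)^2 / q x := by
        apply div_nonneg _ (hqpos x hx).le
        apply mul_nonneg _ (sq_nonneg _)
        apply mul_nonneg hn1
        apply mul_nonneg hx.1.le (hdpos x).le
      have h2 : 2 * g x * (-(((n:ℝ)-1) * (x * (1 + (deriv v x)^2)) * g x / q x))
          = -(2 * (((n:ℝ)-1) * (x * (1 + (deriv v x)^2)) * (g x)^2 / q x)) := by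
        field_simp
      rw [h2]
      linarith
  -- g vanishes identically
  have hg0 : ∀ r ∈ Set.Ioo (0:ℝ) b, g r = 0 := by
    by_contra hcon
    push_neg at hcon
    obtain ⟨r₀, hr₀, hgr₀⟩ := hcon
    set c : ℝ := |g r₀| with hc_def
    have hcpos : 0 < c := abs_pos.mpr hgr₀
    have habs : ∀ s ∈ Set.Ioo (0:ℝ) b, s ≤ r₀ → c ≤ |g s| := by
      intro s hs hsr
      have h1 : g r₀ ^ 2 ≤ g s ^ 2 := hanti hs hr₀ hsr
      simp only [hc_def]
      nlinarith [sq_abs (g s), sq_abs (g r₀), abs_nonneg (g s), abs_nonneg (g r₀)]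
    have hIccsub : ∀ s : ℝ, 0 < s → Set.Icc s r₀ ⊆ Set.Ioo 0 b := by
      intro s hs x hx
      exact ⟨lt_of_lt_of_le hs hx.1, lt_of_le_of_lt hx.2 hr₀.2⟩
    -- eventual smallness facts
    have hev1 : ∀ᶠ s in nhdsWithin 0 (Set.Ioi 0), |v s| < c/2 := by
      have := hlim (Metric.ball_mem_nhds (0:ℝ) (by linarith : (0:ℝ) < c/2))
      refine Filter.mem_of_superset this fun r hr => ?_
      simpa [Metric.mem_ball, Real.dist_eq] using hr
    rcases Ne.lt_or_gt hgr₀ with hneg | hpos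
    · -- g r₀ < 0 : g s ≤ -c for s ≤ r₀
      have hcneg : c = -g r₀ := by rw [hc_def, abs_of_neg hneg]
      have hgub : ∀ s ∈ Set.Ioo (0:ℝ) b, s ≤ r₀ → g s ≤ -c := by
        intro s hs hsr
        by_contra hlt
        push_neg at hlt
        have h1 : c ≤ |g s| := habs s hs hsr
        have hgs : 0 < g s := by
          rcases le_or_gt (g s) 0 with h | h
          · rw [abs_of_nonpos h] at h1; linarith
          · exact h
        have hIcc := hIccsub s hs.1
        have hcont : ContinuousOn g (Set.Icc s r₀) := fun x hx =>
          (hgcont x (hIcc hx)).continuousWithinAt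
        have h0mem : (0:ℝ) ∈ Set.Icc (g r₀) (g s) := ⟨hneg.le, hgs.le⟩
        obtain ⟨t, ht, hgt⟩ := intermediate_value_Icc' hsr hcont h0mem
        have := habs t (hIcc ht) ht.2
        rw [hgt] at this
        simp at this
        linarith
      -- ψ = (v - c)/r is antitone on Ioo 0 r₀
      have hψd : ∀ r ∈ Set.Ioo (0:ℝ) r₀, HasDerivAt (fun r => (v r - c)/r)
          ((g r + c)/r^2) r := by
        intro r hr
        have hrb : r ∈ Set.Ioo (0:ℝ) b := ⟨hr.1, lt_trans hr.2 hr₀.2⟩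
        have := ((hd1 r hrb).sub_const c).div (hasDerivAt_id r) hr.1.ne'
        refine this.congr_deriv ?_
        simp only [hg_def, id_eq]
        field_simp
        ring
      have hψanti : AntitoneOn (fun r => (v r - c)/r) (Set.Ioo 0 r₀) := by
        apply antitoneOn_of_hasDerivWithinAt_nonpos (convex_Ioo 0 r₀)
          (f' := fun r => (g r + c)/r^2)
        · intro x hx
          exact (hψd x hx).continuousAt.continuousWithinAt
        · intro x hx
          rw [interior_Ioo] at hx
          exact (hψd x hx).hasDerivWithinAt
        · intro x hx
          rw [interior_Ioo] at hx
          have h1 := hgub x ⟨hx.1, lt_trans hx.2 hr₀.2⟩ hx.2.le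
          have h2 : 0 < x^2 := pow_pos hx.1 2
          apply div_nonpos_of_nonpos_of_nonneg (by linarith) h2.le
      set r₂ : ℝ := r₀/2 with hr₂_def
      have hr₂mem : r₂ ∈ Set.Ioo (0:ℝ) r₀ := ⟨by
        simp only [hr₂_def]; linarith [hr₀.1], by
        simp only [hr₂_def]; linarith [hr₀.1]⟩
      set K : ℝ := (v r₂ - c)/r₂ with hK_def
      have hbound : ∀ s ∈ Set.Ioo (0:ℝ) r₂, K * s + c ≤ v s := by
        intro s hs
        have h1 := hψanti ⟨hs.1, lt_trans hs.2 hr₂mem.2⟩ hr₂mem hs.2.le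
        have h2 : K ≤ (v s - c)/s := h1
        have := (le_div_iff₀ hs.1).mp h2
        linarith
      have hev2 : ∀ᶠ s in nhdsWithin 0 (Set.Ioi 0), |K| * s < c/2 := by
        have hT : Filter.Tendsto (fun s : ℝ => |K| * s) (nhdsWithin 0 (Set.Ioi 0)) (nhds 0) := by
          have hc : Continuous fun s : ℝ => |K| * s := continuous_const.mul continuous_id
          have := (hc.tendsto (0:ℝ)).mono_left
            (nhdsWithin_le_nhds (s := Set.Ioi (0:ℝ)))
          simpa using this
        exact hT.eventually_lt_const (by linarith)
      have hev3 : ∀ᶠ s in nhdsWithin 0 (Set.Ioi 0), s ∈ Set.Ioo (0:ℝ) r₂ :=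
        Filter.eventually_of_mem (Ioo_mem_nhdsGT hr₂mem.1) (fun s hs => hs)
      obtain ⟨s, ⟨⟨hs1, hs2⟩, hs3⟩⟩ := ((hev1.and hev2).and hev3).exists
      have h4 := hbound s hs3
      have h5 : -(|K| * s) ≤ K * s := by
        have := neg_abs_le (K * s)
        rw [abs_mul, abs_of_pos hs3.1] at this
        linarith
      have h6 : v s < c/2 := lt_of_le_of_lt (le_abs_self _) hs1
      linarith
    · -- g r₀ > 0 : g s ≥ c for s ≤ r₀
      have hglb : ∀ s ∈ Set.Ioo (0:ℝ) b, s ≤ r₀ → c ≤ g s := by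
        intro s hs hsr
        by_contra hlt
        push_neg at hlt
        have h1 : c ≤ |g s| := habs s hs hsr
        have hgs : g s < 0 := by
          rcases le_or_gt 0 (g s) with h | h
          · rw [abs_of_nonneg h] at h1; linarith
          · exact h
        have hIcc := hIccsub s hs.1
        have hcont : ContinuousOn g (Set.Icc s r₀) := fun x hx =>
          (hgcont x (hIcc hx)).continuousWithinAt
        have h0mem : (0:ℝ) ∈ Set.Icc (g s) (g r₀) := ⟨hgs.le, hpos.le⟩
        obtain ⟨t, ht, hgt⟩ := intermediate_value_Icc hsr hcont h0mem
        have := habs t (hIcc ht) ht.2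
        rw [hgt] at this
        simp at this
        linarith
      have hψd : ∀ r ∈ Set.Ioo (0:ℝ) r₀, HasDerivAt (fun r => (v r + c)/r)
          ((g r - c)/r^2) r := by
        intro r hr
        have hrb : r ∈ Set.Ioo (0:ℝ) b := ⟨hr.1, lt_trans hr.2 hr₀.2⟩
        have := ((hd1 r hrb).add_const c).div (hasDerivAt_id r) hr.1.ne'
        refine this.congr_deriv ?_
        simp only [hg_def, id_eq]
        field_simp
        ring
      have hψmono : MonotoneOn (fun r => (v r + c)/r) (Set.Ioo 0 r₀) := by
        apply monotoneOn_of_hasDerivWithinAt_nonneg (convex_Ioo 0 r₀)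
          (f' := fun r => (g r - c)/r^2)
        · intro x hx
          exact (hψd x hx).continuousAt.continuousWithinAt
        · intro x hx
          rw [interior_Ioo] at hx
          exact (hψd x hx).hasDerivWithinAt
        · intro x hx
          rw [interior_Ioo] at hx
          have h1 := hglb x ⟨hx.1, lt_trans hx.2 hr₀.2⟩ hx.2.le
          have h2 : 0 < x^2 := pow_pos hx.1 2
          apply div_nonneg (by linarith) h2.le
      set r₂ : ℝ := r₀/2 with hr₂_def
      have hr₂mem : r₂ ∈ Set.Ioo (0:ℝ) r₀ := ⟨by
        simp only [hr₂_def]; linarith [hr₀.1], by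
        simp only [hr₂_def]; linarith [hr₀.1]⟩
      set K : ℝ := (v r₂ + c)/r₂ with hK_def
      have hbound : ∀ s ∈ Set.Ioo (0:ℝ) r₂, v s ≤ K * s - c := by
        intro s hs
        have h1 := hψmono ⟨hs.1, lt_trans hs.2 hr₂mem.2⟩ hr₂mem hs.2.le
        have h2 : (v s + c)/s ≤ K := h1
        have := (div_le_iff₀ hs.1).mp h2
        linarith
      have hev2 : ∀ᶠ s in nhdsWithin 0 (Set.Ioi 0), |K| * s < c/2 := by
        have hT : Filter.Tendsto (fun s : ℝ => |K| * s) (nhdsWithin 0 (Set.Ioi 0)) (nhds 0) := by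
          have hc : Continuous fun s : ℝ => |K| * s := continuous_const.mul continuous_id
          have := (hc.tendsto (0:ℝ)).mono_left
            (nhdsWithin_le_nhds (s := Set.Ioi (0:ℝ)))
          simpa using this
        exact hT.eventually_lt_const (by linarith)
      have hev3 : ∀ᶠ s in nhdsWithin 0 (Set.Ioi 0), s ∈ Set.Ioo (0:ℝ) r₂ :=
        Filter.eventually_of_mem (Ioo_mem_nhdsGT hr₂mem.1) (fun s hs => hs)
      obtain ⟨s, ⟨⟨hs1, hs2⟩, hs3⟩⟩ := ((hev1.and hev2).and hev3).exists
      have h4 := hbound s hs3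
      have h5 : K * s ≤ |K| * s := by
        have := le_abs_self (K * s)
        rw [abs_mul, abs_of_pos hs3.1] at this
        linarith
      have h6 : -(c/2) < v s := by
        have := neg_abs_le (v s)
        linarith
      linarith
  -- hence v r / r is constant
  have hwd : ∀ r ∈ Set.Ioo (0:ℝ) b, HasDerivAt (fun r => v r / r) 0 r := by
    intro r hr
    have := (hd1 r hr).fun_div (hasDerivAt_id r) hr.1.ne'
    refine this.congr_deriv ?_
    simp only [id_eq]
    have h0 := hg0 r hr
    simp only [hg_def] at h0
    have hnum : deriv v r * r - v r * 1 = 0 := by linarith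
    rw [hnum, zero_div]
  have hwmono : MonotoneOn (fun r => v r / r) (Set.Ioo 0 b) := by
    apply monotoneOn_of_hasDerivWithinAt_nonneg (convex_Ioo 0 b) (f' := fun _ => (0:ℝ))
    · intro x hx
      exact (hwd x hx).continuousAt.continuousWithinAt
    · intro x hx
      rw [interior_Ioo] at hx
      exact (hwd x hx).hasDerivWithinAt
    · intro x _
      exact le_refl 0
  have hwanti : AntitoneOn (fun r => v r / r) (Set.Ioo 0 b) := by
    apply antitoneOn_of_hasDerivWithinAt_nonpos (convex_Ioo 0 b) (f' := fun _ => (0:ℝ))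
    · intro x hx
      exact (hwd x hx).continuousAt.continuousWithinAt
    · intro x hx
      rw [interior_Ioo] at hx
      exact (hwd x hx).hasDerivWithinAt
    · intro x _
      exact le_refl 0
  have hb2 : b/2 ∈ Set.Ioo (0:ℝ) b := ⟨by positivity, by linarith⟩
  refine ⟨v (b/2) / (b/2), fun r hr => ?_⟩
  have hkey : v r / r = v (b/2) / (b/2) := by
    rcases le_total r (b/2) with hle | hle
    · exact le_antisymm (hwmono hr hb2 hle) (hwanti hr hb2 hle)
    · exact le_antisymm (hwanti hb2 hr hle) (hwmono hb2 hr hle)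
  rw [div_eq_div_iff hr.1.ne' (by positivity : (b/2) ≠ (0:ℝ))] at hkey
  field_simp at hkey ⊢
  linarith [hkey]
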